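/- arXiv:1405.2183 — 3 statements merged into one kernel-verified Lean document; each statement's English description precedes it below -/
import Mathlib

section
/- Let 1 ≤ p < d and 1 ≤ k < d−p−1 be integers. Define η(d,p,k) = (d/2)^{−kp/2} · ∏_{i=1}^k Γ((d−i+1)/2)/Γ((d−p−i+1)/2). Then 0 < η(d,p,k) ≤ exp[ (p²/d) · (1 − (p+k−1)/d)^{−1} · k²/2 ]. -/
lemma gamma_frac_le (x s : ℝ) (hx : 0 < x) (hs0 : 0 ≤ s) (hs1 : s ≤ 1) :
    Real.Gamma (x + s) ≤ Real.Gamma x * x ^ s := by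
  have hx1 : (0:ℝ) < x + 1 := by linarith
  have h := Real.convexOn_log_Gamma.2 (Set.mem_Ioi.2 hx) (Set.mem_Ioi.2 hx1)
    (by linarith : (0:ℝ) ≤ 1 - s) hs0 (by ring)
  simp only [smul_eq_mul, Function.comp_apply] at h
  have harg : (1 - s) * x + s * (x + 1) = x + s := by ring
  rw [harg, Real.Gamma_add_one hx.ne', Real.log_mul hx.ne' (Real.Gamma_pos_of_pos hx).ne'] at h
  have h2 : Real.log (Real.Gamma (x + s)) ≤ Real.log (Real.Gamma x) + s * Real.log x := by
    nlinarith
  have hG : 0 < Real.Gamma (x + s) := Real.Gamma_pos_of_pos (by linarith)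
  calc Real.Gamma (x + s) = Real.exp (Real.log (Real.Gamma (x + s))) := (Real.exp_log hG).symm
    _ ≤ Real.exp (Real.log (Real.Gamma x) + s * Real.log x) := Real.exp_le_exp.2 h2
    _ = Real.Gamma x * x ^ s := by
        rw [Real.exp_add, Real.exp_log (Real.Gamma_pos_of_pos hx),
          Real.rpow_def_of_pos hx, mul_comm s]

lemma gamma_shift_le (x s c : ℝ) (hx : 0 < x) (hs0 : 0 ≤ s) (hs1 : s ≤ 1) :
    ∀ m : ℕ, x + m + s ≤ c → Real.Gamma (x + (m + s)) ≤ Real.Gamma x * c ^ ((m : ℝ) + s) := by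
  intro m
  induction m with
  | zero =>
    intro hc
    simp only [Nat.cast_zero, zero_add, add_zero] at *
    calc Real.Gamma (x + s) ≤ Real.Gamma x * x ^ s := gamma_frac_le x s hx hs0 hs1
      _ ≤ Real.Gamma x * c ^ s := by
          exact mul_le_mul_of_nonneg_left
            (Real.rpow_le_rpow hx.le (by linarith) hs0) (Real.Gamma_pos_of_pos hx).le
  | succ m ih =>
    intro hc
    have hc' : x + m + s ≤ c := by push_cast at hc ⊢; linarith
    have hpos : 0 < x + (m + s) := by positivity
    have hcpos : 0 < c := lt_of_lt_of_le (by positivity) hc'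
    have key : Real.Gamma (x + (↑(m + 1) + s)) = (x + (m + s)) * Real.Gamma (x + (m + s)) := by
      rw [show x + (↑(m + 1) + s) = (x + (m + s)) + 1 by push_cast; ring,
        Real.Gamma_add_one hpos.ne']
    rw [key]
    calc (x + (m + s)) * Real.Gamma (x + (m + s))
        ≤ c * (Real.Gamma x * c ^ ((m : ℝ) + s)) := by
          apply mul_le_mul (by linarith) (ih hc') (Real.Gamma_pos_of_pos hpos).le hcpos.le
      _ = Real.Gamma x * c ^ ((↑(m + 1) : ℝ) + s) := by
          rw [show ((↑(m + 1) : ℝ) + s) = ((m : ℝ) + s) + 1 by push_cast; ring,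
            Real.rpow_add_one hcpos.ne']
          ring

/-- Bound on the normalizing constant `η(d,p,k)` of the rotational-clones density:
for `1 ≤ p < d` and `1 ≤ k < d − p − 1`,
`0 < η(d,p,k) ≤ exp[(p²/d)·(1 − (p+k−1)/d)⁻¹·k²/2]`, where
`η(d,p,k) = (d/2)^(−kp/2) ∏_{i=1}^k Γ((d−i+1)/2)/Γ((d−p−i+1)/2)`. -/
theorem eta_normalizing_constant_bound (d p k : ℕ)
    (hp : 1 ≤ p) (hpd : p < d) (hk : 1 ≤ k) (hkd : k + p + 1 < d) :
    0 < ((d : ℝ) / 2) ^ (-((k : ℝ) * p) / 2) *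
        ∏ i ∈ Finset.Icc 1 k,
          Real.Gamma (((d : ℝ) - i + 1) / 2) / Real.Gamma (((d : ℝ) - p - i + 1) / 2) ∧
    ((d : ℝ) / 2) ^ (-((k : ℝ) * p) / 2) *
        ∏ i ∈ Finset.Icc 1 k,
          Real.Gamma (((d : ℝ) - i + 1) / 2) / Real.Gamma (((d : ℝ) - p - i + 1) / 2)
      ≤ Real.exp ((p : ℝ) ^ 2 / d * (1 - ((p : ℝ) + k - 1) / d)⁻¹ * k ^ 2 / 2) := by
  have hd : (0:ℝ) < d := by exact_mod_cast Nat.lt_of_lt_of_le hp hpd.le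
  have hd2 : (0:ℝ) < (d:ℝ) / 2 := by positivity
  -- positivity of each factor
  have hnum : ∀ i ∈ Finset.Icc 1 k, 0 < Real.Gamma (((d : ℝ) - i + 1) / 2) := by
    intro i hi
    simp only [Finset.mem_Icc] at hi
    apply Real.Gamma_pos_of_pos
    have : (i:ℝ) ≤ k := by exact_mod_cast hi.2
    have : (k:ℝ) + p + 1 < d := by exact_mod_cast hkd
    have hp' : (0:ℝ) ≤ p := by positivity
    linarith
  have hden : ∀ i ∈ Finset.Icc 1 k, 0 < Real.Gamma (((d : ℝ) - p - i + 1) / 2) := by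
    intro i hi
    simp only [Finset.mem_Icc] at hi
    apply Real.Gamma_pos_of_pos
    have : (i:ℝ) ≤ k := by exact_mod_cast hi.2
    have : (k:ℝ) + p + 1 < d := by exact_mod_cast hkd
    linarith
  have hprodpos : 0 < ∏ i ∈ Finset.Icc 1 k,
      Real.Gamma (((d : ℝ) - i + 1) / 2) / Real.Gamma (((d : ℝ) - p - i + 1) / 2) :=
    Finset.prod_pos fun i hi => div_pos (hnum i hi) (hden i hi)
  constructor
  · exact mul_pos (Real.rpow_pos_of_pos hd2 _) hprodpos
  · -- each factor ≤ (d/2)^(p/2)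
    have hfac : ∀ i ∈ Finset.Icc 1 k,
        Real.Gamma (((d : ℝ) - i + 1) / 2) / Real.Gamma (((d : ℝ) - p - i + 1) / 2)
          ≤ ((d:ℝ)/2) ^ ((p:ℝ)/2) := by
      intro i hi
      have hmem := hi
      simp only [Finset.mem_Icc] at hi
      have hi1 : (1:ℝ) ≤ i := by exact_mod_cast hi.1
      have hik : (i:ℝ) ≤ k := by exact_mod_cast hi.2
      have hkd' : (k:ℝ) + p + 1 < d := by exact_mod_cast hkd
      set x : ℝ := ((d : ℝ) - p - i + 1) / 2 with hxdef
      have hp' : (0:ℝ) ≤ p := by positivity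
      have hx : 0 < x := by rw [hxdef]; linarith
      set m : ℕ := p / 2 with hmdef
      set s : ℝ := (↑(p % 2) : ℝ) / 2 with hsdef
      have hs0 : 0 ≤ s := by positivity
      have hs1 : s ≤ 1 := by
        rw [hsdef]
        have : p % 2 ≤ 1 := Nat.lt_succ_iff.mp (Nat.mod_lt p (by norm_num))
        have : ((p % 2 : ℕ) : ℝ) ≤ 1 := by exact_mod_cast this
        linarith
      have hms : (m:ℝ) + s = (p:ℝ)/2 := by
        have h2 : 2 * (p / 2) + p % 2 = p := Nat.div_add_mod p 2
        have h3 : (p:ℝ) = 2 * (m:ℝ) + ((p % 2 : ℕ) : ℝ) := by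
          rw [hmdef]; exact_mod_cast h2.symm
        rw [hsdef]; linarith
      have hxc : x + m + s ≤ (d:ℝ)/2 := by
        have : x + ((m:ℝ) + s) = ((d:ℝ) - i + 1)/2 := by rw [hms, hxdef]; ring
        have hle : ((d:ℝ) - i + 1)/2 ≤ (d:ℝ)/2 := by linarith
        linarith
      have := gamma_shift_le x s ((d:ℝ)/2) hx hs0 hs1 m hxc
      rw [hms] at this
      have hxarg : x + (p:ℝ)/2 = ((d : ℝ) - i + 1) / 2 := by rw [hxdef]; ring
      rw [hxarg] at this
      rw [div_le_iff₀ (hden i hmem)]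
      linarith [this]
    have hprodle : (∏ i ∈ Finset.Icc 1 k,
        Real.Gamma (((d : ℝ) - i + 1) / 2) / Real.Gamma (((d : ℝ) - p - i + 1) / 2))
        ≤ ((d:ℝ)/2) ^ (((k:ℝ) * p)/2) := by
      calc (∏ i ∈ Finset.Icc 1 k,
          Real.Gamma (((d : ℝ) - i + 1) / 2) / Real.Gamma (((d : ℝ) - p - i + 1) / 2))
          ≤ ∏ _i ∈ Finset.Icc 1 k, ((d:ℝ)/2) ^ ((p:ℝ)/2) := by
            apply Finset.prod_le_prod (fun i hi => (div_pos (hnum i hi) (hden i hi)).le) hfac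
        _ = ((d:ℝ)/2) ^ (((k:ℝ) * p)/2) := by
            rw [Finset.prod_const, Nat.card_Icc]
            simp only [Nat.add_sub_cancel]
            rw [← Real.rpow_natCast (((d:ℝ)/2) ^ ((p:ℝ)/2)) k, ← Real.rpow_mul hd2.le]
            ring_nf
    have heta1 : ((d : ℝ) / 2) ^ (-((k : ℝ) * p) / 2) *
        (∏ i ∈ Finset.Icc 1 k,
          Real.Gamma (((d : ℝ) - i + 1) / 2) / Real.Gamma (((d : ℝ) - p - i + 1) / 2)) ≤ 1 := by
      have h1 : ((d : ℝ) / 2) ^ (-((k : ℝ) * p) / 2) * ((d:ℝ)/2) ^ (((k:ℝ) * p)/2) = 1 := by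
        rw [← Real.rpow_add hd2]; ring_nf; exact Real.rpow_zero _
      calc ((d : ℝ) / 2) ^ (-((k : ℝ) * p) / 2) *
          (∏ i ∈ Finset.Icc 1 k,
            Real.Gamma (((d : ℝ) - i + 1) / 2) / Real.Gamma (((d : ℝ) - p - i + 1) / 2))
          ≤ ((d : ℝ) / 2) ^ (-((k : ℝ) * p) / 2) * ((d:ℝ)/2) ^ (((k:ℝ) * p)/2) :=
            mul_le_mul_of_nonneg_left hprodle (Real.rpow_pos_of_pos hd2 _).le
        _ = 1 := h1
    refine le_trans heta1 ?_
    apply Real.one_le_exp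
    have hpk : ((p:ℝ) + k - 1) / d < 1 := by
      rw [div_lt_one hd]
      have : (k:ℝ) + p + 1 < d := by exact_mod_cast hkd
      linarith
    have h2 : 0 < 1 - ((p : ℝ) + k - 1) / d := by linarith
    positivity
end

section
/- In the setting of the previous equivalence (w_1,…,w_k linearly independent, N = [w_1,…,w_k], x ∈ ℝ^p with ‖x‖²·ι'(N'N)^{−1}ι < 1, and B a d×p matrix with orthonormal columns satisfying w_j = Bx + (I_d−BB')w_j for all j and rank([N,B]) = k+p), the matrix A = (I_d − N(N'N)^{−1}N')B satisfies det(A'A) = 1 − ‖x‖²·ι'(N'N)^{−1}ι. -/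
open Matrix

/-- With `N = [w₁,…,w_k]` of full column rank, `x` with `‖x‖²·ι'(N'N)⁻¹ι < 1`, and `B`
orthonormal with `w_j = Bx + (I−BB')w_j` and `rank [N,B] = k+p`, the matrix
`A = (I − N(N'N)⁻¹N')B` satisfies `det(A'A) = 1 − ‖x‖²·ι'(N'N)⁻¹ι`. -/
theorem det_residual_gram {d p k : ℕ} (hk : 1 ≤ k) (hkd : k + p ≤ d)
    (N : Matrix (Fin d) (Fin k) ℝ)
    (hN : LinearIndependent ℝ fun j : Fin k => (fun i => N i j : Fin d → ℝ))
    (x : Fin p → ℝ)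
    (hx : (∑ i, x i ^ 2) * (∑ i, ∑ j, (Nᵀ * N)⁻¹ i j) < 1)
    (B : Matrix (Fin d) (Fin p) ℝ)
    (hB : Bᵀ * B = 1)
    (hrank : (fromCols N B).rank = k + p)
    (hw : ∀ j : Fin k,
      (fun i => N i j) = B.mulVec x + (1 - B * Bᵀ).mulVec fun i => N i j) :
    (((1 - N * (Nᵀ * N)⁻¹ * Nᵀ) * B)ᵀ * ((1 - N * (Nᵀ * N)⁻¹ * Nᵀ) * B)).det =
      1 - (∑ i, x i ^ 2) * (∑ i, ∑ j, (Nᵀ * N)⁻¹ i j) := by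
  set G := (Nᵀ * N)⁻¹ with hGdef
  -- N'N is invertible
  have hdet : (Nᵀ * N).det ≠ 0 := by
    intro h
    obtain ⟨v, hv0, hv⟩ := (Matrix.exists_mulVec_eq_zero_iff).2 h
    have hNv : N *ᵥ v = 0 := by
      have h1 : (N *ᵥ v) ⬝ᵥ (N *ᵥ v) = 0 := by
        have : v ⬝ᵥ ((Nᵀ * N) *ᵥ v) = 0 := by rw [hv, dotProduct_zero]
        rwa [← Matrix.mulVec_mulVec, Matrix.dotProduct_mulVec v Nᵀ, Matrix.vecMul_transpose] at this
      exact dotProduct_self_eq_zero.mp h1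
    refine hv0 ?_
    have := Fintype.linearIndependent_iff.mp hN v ?_
    · funext j; exact this j
    · funext i
      simpa [Matrix.mulVec, dotProduct, mul_comm] using congrFun hNv i
  have hGN : G * (Nᵀ * N) = 1 := Matrix.nonsing_inv_mul _ (by simpa using hdet)
  have hNG : (Nᵀ * N) * G = 1 := Matrix.mul_nonsing_inv _ (by simpa using hdet)
  have hGT : Gᵀ = G := by
    rw [hGdef, Matrix.transpose_nonsing_inv, Matrix.transpose_mul, Matrix.transpose_transpose]
  -- B'N has columns all equal to x
  set X : Matrix (Fin p) (Fin k) ℝ := Matrix.of fun i _ => x i with hXdef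
  have hNmat : N = B * X + (1 - B * Bᵀ) * N := by
    ext i j
    have := congrFun (hw j) i
    simpa [Matrix.mul_apply, Matrix.mulVec, dotProduct, hXdef] using this
  have hX : Bᵀ * N = X := by
    conv_lhs => rw [hNmat]
    simp only [Matrix.mul_add, Matrix.mul_sub, Matrix.sub_mul, Matrix.mul_one, Matrix.one_mul,
      ← Matrix.mul_assoc, hB, sub_self, add_zero]
  -- projection idempotence and the Gram matrix
  set P : Matrix (Fin d) (Fin d) ℝ := N * G * Nᵀ with hPdef
  have hPP : P * P = P := by
    rw [hPdef]
    calc N * G * Nᵀ * (N * G * Nᵀ) = N * (G * (Nᵀ * N)) * (G * Nᵀ) := by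
          simp only [Matrix.mul_assoc]
      _ = N * G * Nᵀ := by rw [hGN, Matrix.mul_one, Matrix.mul_assoc]
  have hPT : Pᵀ = P := by
    rw [hPdef, Matrix.transpose_mul, Matrix.transpose_mul, Matrix.transpose_transpose, hGT,
      Matrix.mul_assoc]
  have hgram : ((1 - P) * B)ᵀ * ((1 - P) * B) = 1 - X * G * Xᵀ := by
    have h2 : (1 - P) * (1 - P) = 1 - P := by
      rw [Matrix.sub_mul, Matrix.mul_sub, Matrix.mul_sub, hPP]
      noncomm_ring
    rw [Matrix.transpose_mul, Matrix.transpose_sub, Matrix.transpose_one, hPT,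
      show Bᵀ * (1 - P) * ((1 - P) * B) = Bᵀ * ((1 - P) * (1 - P)) * B by
        simp only [Matrix.mul_assoc], h2]
    rw [Matrix.mul_sub, Matrix.mul_one, Matrix.sub_mul, hB]
    congr 1
    have hXGX : X * G * Xᵀ = Bᵀ * (N * (G * (Nᵀ * B))) := by
      rw [← hX, Matrix.transpose_mul, Matrix.transpose_transpose]
      simp only [Matrix.mul_assoc]
    rw [hXGX, hPdef]
    simp only [Matrix.mul_assoc]
  rw [hgram]
  -- compute the determinant via the matrix determinant lemma
  set c : ℝ := ∑ i, ∑ j, G i j with hcdef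
  have hrw : 1 - X * G * Xᵀ =
      1 + replicateCol (Fin 1) (fun i => -(c * x i)) * replicateRow (Fin 1) x := by
    ext i j
    simp [Matrix.mul_apply, Matrix.one_apply, hXdef, hcdef, Finset.sum_mul, Finset.mul_sum,
      sub_eq_add_neg, mul_comm, mul_left_comm]
    rw [Finset.sum_comm]
  rw [hrw]; erw [Matrix.det_one_add_replicateCol_mul_replicateRow (ι := Fin 1)]
  have h3 : x ⬝ᵥ (fun i => -(c * x i)) = -((∑ i, x i ^ 2) * c) := by
    simp only [dotProduct]
    trans (∑ i, -(c * x i ^ 2))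
    · exact Finset.sum_congr rfl fun i _ => by ring
    · rw [Finset.sum_neg_distrib, ← Finset.mul_sum]; ring
  rw [h3]
  ring
end

section
/- Let k and p be positive integers and g₂(z) = z^{−p/2} for z > 0. Then g₂(z) = p₂(z−1) + δ₂, where p₂(y) = 1 + Σ_{j=1}^k [(−1/2)^j/j! · ∏_{i=0}^{j−1}(p+2i)] y^j is a polynomial of degree k whose j-th coefficient is bounded in absolute value by p^j, and the remainder satisfies sup_{z : |z−1| < 1/(2p)} |δ₂| / |z−1|^{k+1} ≤ p^{k+1} · (2e)^{1/4} · 2^{k+1}. -/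
open Finset

lemma prod_p_add_le (p j : ℕ) (hp : 0 < p) :
    ∏ i ∈ Finset.range j, ((p : ℝ) + 2 * i) ≤ (2 * p) ^ j * (Nat.factorial j : ℝ) := by
  have hp1 : (1 : ℝ) ≤ p := by exact_mod_cast hp
  calc ∏ i ∈ Finset.range j, ((p : ℝ) + 2 * i)
      ≤ ∏ i ∈ Finset.range j, (2 * (p : ℝ) * (i + 1)) := by
        apply Finset.prod_le_prod
        · intro i _; positivity
        · intro i _; nlinarith [Nat.cast_nonneg (α := ℝ) i]
    _ = (2 * p) ^ j * (Nat.factorial j : ℝ) := by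
        rw [Finset.prod_mul_distrib, Finset.prod_const, Finset.card_range]
        congr 1
        rw_mod_cast [Finset.prod_range_add_one_eq_factorial]

lemma prod_shift (p j : ℕ) :
    ∏ i ∈ Finset.range j, (-(p:ℝ)/2 - i)
      = (-1/2 : ℝ) ^ j * ∏ i ∈ Finset.range j, ((p : ℝ) + 2 * i) := by
  calc ∏ i ∈ Finset.range j, (-(p:ℝ)/2 - i)
      = ∏ i ∈ Finset.range j, ((-1/2 : ℝ) * ((p : ℝ) + 2 * i)) :=
        Finset.prod_congr rfl (fun i _ => by ring)
    _ = (-1/2 : ℝ) ^ j * ∏ i ∈ Finset.range j, ((p : ℝ) + 2 * i) := by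
        rw [Finset.prod_mul_distrib, Finset.prod_const, Finset.card_range]

lemma coeff_bound (p j : ℕ) (hp : 0 < p) :
    |(-1 / 2 : ℝ) ^ j / (Nat.factorial j : ℝ) * ∏ i ∈ Finset.range j, ((p : ℝ) + 2 * i)|
      ≤ (p : ℝ) ^ j := by
  have h1 := prod_p_add_le p j hp
  have h2 : (0:ℝ) ≤ ∏ i ∈ Finset.range j, ((p : ℝ) + 2 * i) := by
    apply Finset.prod_nonneg; intro i _; positivity
  have h3 : (0:ℝ) < (Nat.factorial j : ℝ) := by exact_mod_cast Nat.factorial_pos j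
  have hhalf : (1/2:ℝ)^j * (2:ℝ)^j = 1 := by rw [← mul_pow]; norm_num
  rw [abs_mul, abs_div, abs_pow]
  have habs : |(-1/2 : ℝ)| = 1/2 := by norm_num
  rw [habs, abs_of_nonneg h2, abs_of_pos h3]
  rw [div_mul_eq_mul_div, div_le_iff₀ h3]
  calc (1/2:ℝ)^j * ∏ i ∈ Finset.range j, ((p : ℝ) + 2 * i)
      ≤ (1/2:ℝ)^j * ((2 * p) ^ j * (Nat.factorial j : ℝ)) := by
        apply mul_le_mul_of_nonneg_left h1 (by positivity)
    _ = (p:ℝ)^j * (Nat.factorial j : ℝ) := by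
        rw [mul_pow, show (1/2:ℝ)^j * ((2:ℝ)^j * (p:ℝ)^j * (Nat.factorial j : ℝ)) = ((1/2:ℝ)^j * (2:ℝ)^j) * ((p:ℝ)^j * (Nat.factorial j:ℝ)) by ring, hhalf, one_mul]

lemma iteratedDerivWithin_affine_rpow (c a b : ℝ) {s : Set ℝ} (hs : UniqueDiffOn ℝ s)
    (h0 : ∀ y ∈ s, 0 < a + b * y) (n : ℕ) :
    ∀ x ∈ s, iteratedDerivWithin n (fun y : ℝ => (a + b * y) ^ c) s x
      = b ^ n * (∏ i ∈ Finset.range n, (c - i)) * (a + b * x) ^ (c - n) := by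
  induction n with
  | zero => intro x hx; simp
  | succ n ih =>
    intro x hx
    rw [iteratedDerivWithin_succ]
    rw [derivWithin_congr (fun y hy => ih y hy) (ih x hx)]
    have hx0 := h0 x hx
    have hd2 : HasDerivAt (fun y : ℝ => b ^ n * (∏ i ∈ Finset.range n, (c - i)) * (a + b * y) ^ (c - n))
        (b ^ n * (∏ i ∈ Finset.range n, (c - i)) * ((c - n) * (a + b * x) ^ (c - n - 1) * b)) x := by
      have h1 : HasDerivAt (fun y : ℝ => a + b * y) b x := by
        simpa using ((hasDerivAt_id x).const_mul b).const_add a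
      exact ((Real.hasDerivAt_rpow_const (p := c - n) (Or.inl hx0.ne')).comp x h1).const_mul _
    rw [(hd2.hasDerivWithinAt).derivWithin (hs x hx)]
    rw [Finset.prod_range_succ]
    rw [show c - ((n : ℕ) + 1 : ℕ) = c - n - 1 by push_cast; ring]
    ring

lemma log_one_sub_ge {t : ℝ} (ht0 : 0 < t) (ht : t ≤ 1/2) :
    -(1 + Real.log 2) * t ≤ Real.log (1 - t) := by
  have hl2 : (0.6931 : ℝ) < Real.log 2 := Real.log_two_gt_d9.trans_le' (by norm_num)
  have hl2' : Real.log 2 < 0.6932 := Real.log_two_lt_d9.trans (by norm_num)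
  set c : ℝ := 1 + Real.log 2 with hc
  have hc0 : 0 < c := by positivity
  have h1t : (0:ℝ) < 1 - t := by linarith
  have key : Real.exp (-(c * t)) ≤ 1 - t := by
    have h1 : 1 + c * t / 2 ≤ Real.exp (c * t / 2) := by
      linarith [Real.add_one_le_exp (c * t / 2)]
    have hsq : (1 + c * t / 2)^2 ≤ Real.exp (c * t) := by
      calc (1 + c * t / 2)^2 ≤ (Real.exp (c * t / 2))^2 := by
            apply pow_le_pow_left₀ (by positivity) h1
        _ = Real.exp (c * t) := by
            rw [sq, ← Real.exp_add]; ring_nf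
    have hinv : ((1 + c * t / 2)^2)⁻¹ ≤ 1 - t := by
      rw [inv_eq_one_div, div_le_iff₀ (by positivity)]
      have hcl : (1.6931:ℝ) < c := by rw [hc]; linarith
      have hcu : c < (1.6932:ℝ) := by rw [hc]; linarith
      nlinarith [mul_nonneg ht0.le (sub_nonneg.2 (by linarith : t ≤ 1/2)),
        mul_nonneg (sq_nonneg c) (mul_nonneg ht0.le (sub_nonneg.2 (by linarith : t ≤ 1/2))),
        mul_nonneg (mul_nonneg hc0.le ht0.le) (sub_nonneg.2 (by linarith : t ≤ 1/2)),
        mul_pos ht0 hc0, sq_nonneg (c - 1.6931), mul_nonneg ht0.le hc0.le]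
    calc Real.exp (-(c * t)) = (Real.exp (c * t))⁻¹ := Real.exp_neg _
      _ ≤ ((1 + c * t / 2)^2)⁻¹ := by
          apply inv_anti₀ (by positivity) hsq
      _ ≤ 1 - t := hinv
  calc -(1 + Real.log 2) * t = Real.log (Real.exp (-(c * t))) := by rw [Real.log_exp]; ring
    _ ≤ Real.log (1 - t) := Real.log_le_log (Real.exp_pos _) key

lemma rpow_neg_half_le (p : ℕ) (hp : 0 < p) {y : ℝ} (hy1 : 1 - 1/(2*(p:ℝ)) ≤ y) (hy2 : y ≤ 1) :
    y ^ (-(p:ℝ)/2) ≤ (2 * Real.exp 1) ^ ((1:ℝ)/4) := by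
  have hp1 : (1:ℝ) ≤ p := by exact_mod_cast hp
  have ht0 : (0:ℝ) < 1/(2*(p:ℝ)) := by positivity
  have ht : 1/(2*(p:ℝ)) ≤ 1/2 := by
    apply div_le_div_of_nonneg_left (by norm_num) (by norm_num); linarith
  have hy0 : (0:ℝ) < y := by linarith
  have hlog : -(1 + Real.log 2) * (1/(2*(p:ℝ))) ≤ Real.log y := by
    calc -(1 + Real.log 2) * (1/(2*(p:ℝ))) ≤ Real.log (1 - 1/(2*(p:ℝ))) :=
          log_one_sub_ge ht0 ht
      _ ≤ Real.log y := Real.log_le_log (by linarith) hy1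
  have hE : (2 * Real.exp 1) ^ ((1:ℝ)/4) = Real.exp ((Real.log 2 + 1)/4) := by
    rw [Real.rpow_def_of_pos (by positivity), Real.log_mul (by norm_num) (Real.exp_ne_zero 1),
      Real.log_exp]
    ring_nf
  rw [Real.rpow_def_of_pos hy0, hE]
  apply Real.exp_le_exp.2
  have hp0 : (p:ℝ) ≠ 0 := by positivity
  calc Real.log y * (-(p:ℝ)/2)
      ≤ (-(1 + Real.log 2) * (1/(2*(p:ℝ)))) * (-(p:ℝ)/2) :=
        mul_le_mul_of_nonpos_right hlog (by linarith)
    _ = (Real.log 2 + 1)/4 := by field_simp; ring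

lemma abs_prod_le (p m : ℕ) (hp : 0 < p) :
    |∏ i ∈ Finset.range m, (-(p:ℝ)/2 - i)| ≤ (p:ℝ)^m * (Nat.factorial m : ℝ) := by
  have h := coeff_bound p m hp
  have hm : (0:ℝ) < (Nat.factorial m : ℝ) := by exact_mod_cast Nat.factorial_pos m
  rw [prod_shift]
  have : |(-1/2:ℝ)^m * ∏ i ∈ Finset.range m, ((p : ℝ) + 2 * i)|
      = |(-1 / 2 : ℝ) ^ m / (Nat.factorial m : ℝ) * ∏ i ∈ Finset.range m, ((p : ℝ) + 2 * i)|
        * (Nat.factorial m : ℝ) := by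
    rw [abs_mul, abs_mul, abs_div, abs_of_pos hm]
    field_simp
  rw [this]
  exact mul_le_mul_of_nonneg_right h hm.le

lemma exp_factor_bound (k p : ℕ) (hp : 0 < p) {y : ℝ} (hy : 1 - 1/(2*(p:ℝ)) < y) :
    y ^ (-(p:ℝ)/2 - ((k+1 : ℕ):ℝ)) ≤ (2*Real.exp 1)^((1:ℝ)/4) * 2^(k+1) := by
  have hp1 : (1:ℝ) ≤ p := by exact_mod_cast hp
  have ht : 1/(2*(p:ℝ)) ≤ 1/2 := by
    apply div_le_div_of_nonneg_left (by norm_num) (by norm_num); linarith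
  have hhalf : (1/2 : ℝ) ≤ y := by linarith
  have hy0 : (0:ℝ) < y := by linarith
  have hE1 : (1:ℝ) ≤ (2*Real.exp 1)^((1:ℝ)/4) := by
    calc (1:ℝ) = (1:ℝ)^((1:ℝ)/4) := (Real.one_rpow _).symm
      _ ≤ (2*Real.exp 1)^((1:ℝ)/4) :=
          Real.rpow_le_rpow zero_le_one (by nlinarith [Real.exp_one_gt_d9]) (by norm_num)
  have hsplit : y ^ (-(p:ℝ)/2 - ((k+1 : ℕ):ℝ))
      = y ^ (-(p:ℝ)/2) * (y ^ (k+1))⁻¹ := by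
    rw [sub_eq_add_neg, Real.rpow_add hy0, Real.rpow_neg hy0.le, Real.rpow_natCast]
  rw [hsplit]
  have hinv : (y ^ (k+1))⁻¹ ≤ 2^(k+1) := by
    rw [← one_div, div_le_iff₀ (by positivity)]
    calc (1:ℝ) = (2 * (1/2:ℝ))^(k+1) := by norm_num
      _ ≤ (2 * y)^(k+1) := by
          apply pow_le_pow_left₀ (by norm_num) (by linarith)
      _ = 2^(k+1) * y^(k+1) := by rw [mul_pow]
  rcases le_or_gt y 1 with h1 | h1
  · have h2 := rpow_neg_half_le p hp hy.le h1
    exact mul_le_mul h2 hinv (by positivity) (by positivity)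
  · have h2 : y ^ (-(p:ℝ)/2) ≤ 1 :=
      Real.rpow_le_one_of_one_le_of_nonpos h1.le (by linarith)
    have h3 : (y ^ (k+1))⁻¹ ≤ 1 := by
      rw [inv_le_one_iff₀]; right; exact one_le_pow₀ h1.le
    calc y ^ (-(p:ℝ)/2) * (y ^ (k+1))⁻¹ ≤ 1 * 1 :=
          mul_le_mul h2 h3 (by positivity) zero_le_one
      _ ≤ (2*Real.exp 1)^((1:ℝ)/4) * 2^(k+1) := by
          rw [mul_one]
          exact one_le_mul_of_one_le_of_one_le hE1 (one_le_pow₀ (by norm_num))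

lemma taylor_estimate (k p : ℕ) (hp : 0 < p) {x : ℝ} (hx : 1 < x)
    (a b : ℝ) (hb : b = 1 ∨ b = -1) (hab : a + b = 1)
    (hpos : ∀ y ∈ Set.Icc (1:ℝ) x, 1 - 1/(2*(p:ℝ)) < a + b * y) :
    |(a + b * x) ^ (-(p:ℝ)/2) -
      (1 + ∑ j ∈ Finset.Icc 1 k, (-1/2:ℝ)^j / (Nat.factorial j : ℝ) *
         (∏ i ∈ Finset.range j, ((p:ℝ) + 2*i)) * (b * (x - 1))^j)|
      ≤ (p:ℝ)^(k+1) * (2*Real.exp 1)^((1:ℝ)/4) * 2^(k+1) * (x-1)^(k+1) := by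
  have hp1 : (1:ℝ) ≤ p := by exact_mod_cast hp
  have ht : 1/(2*(p:ℝ)) ≤ 1/2 := by
    apply div_le_div_of_nonneg_left (by norm_num) (by norm_num); linarith
  set c : ℝ := -(p:ℝ)/2 with hc
  set s : Set ℝ := Set.Icc (1:ℝ) x with hs
  have husd : UniqueDiffOn ℝ s := uniqueDiffOn_Icc hx
  have h0 : ∀ y ∈ s, 0 < a + b * y := fun y hy => lt_of_le_of_lt (by linarith) (hpos y hy)
  set F : ℝ → ℝ := fun y => (a + b * y) ^ c with hF
  have hcd : ContDiffOn ℝ (k+1) F s := by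
    intro y hy
    exact ((Real.contDiffAt_rpow_const_of_ne (h0 y hy).ne').comp y
      (contDiffAt_const.add (contDiffAt_const.mul contDiffAt_id))).contDiffWithinAt
  have hcd' : ContDiffOn ℝ k F s := hcd.of_le (by exact_mod_cast Nat.le_succ k)
  have hf' : DifferentiableOn ℝ (iteratedDerivWithin k F s) (Set.Ioo 1 x) :=
    (hcd.differentiableOn_iteratedDerivWithin (by exact_mod_cast k.lt_succ_self) husd).mono
      Set.Ioo_subset_Icc_self
  have hTay0 := taylor_mean_remainder_lagrange (x₀ := 1) (x := x) hx.ne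
    (by rw [Set.uIcc_of_le hx.le, ← hs]; exact hcd')
    (by rw [Set.uIcc_of_le hx.le, Set.uIoo_of_le hx.le, ← hs]; exact hf')
  rw [Set.uIcc_of_le hx.le, Set.uIoo_of_le hx.le, ← hs] at hTay0
  obtain ⟨ξ, hξ, hTay⟩ := hTay0
  have hderiv := iteratedDerivWithin_affine_rpow c a b husd h0
  have h1s : (1:ℝ) ∈ s := Set.mem_Icc.2 ⟨le_rfl, hx.le⟩
  have hab1 : a + b * 1 = 1 := by rw [mul_one, hab]
  have hpoly : taylorWithinEval F k s 1 x
      = 1 + ∑ j ∈ Finset.Icc 1 k, (-1/2:ℝ)^j / (Nat.factorial j : ℝ) *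
         (∏ i ∈ Finset.range j, ((p:ℝ) + 2*i)) * (b * (x - 1))^j := by
    rw [taylor_within_apply]
    have hsplit : Finset.range (k+1) = insert 0 (Finset.Icc 1 k) := by
      ext i; simp only [Finset.mem_range, Finset.mem_insert, Finset.mem_Icc]; omega
    rw [hsplit, Finset.sum_insert (by simp)]
    congr 1
    · rw [hderiv 0 1 h1s, hab1]
      simp [Real.one_rpow]
    · apply Finset.sum_congr rfl
      intro j hj
      rw [hderiv j 1 h1s, hab1, Real.one_rpow, prod_shift, smul_eq_mul, mul_pow]
      ring
  have hgoal : (a + b * x) ^ c -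
      (1 + ∑ j ∈ Finset.Icc 1 k, (-1/2:ℝ)^j / (Nat.factorial j : ℝ) *
         (∏ i ∈ Finset.range j, ((p:ℝ) + 2*i)) * (b * (x - 1))^j)
      = F x - taylorWithinEval F k s 1 x := by rw [hpoly]
  rw [hgoal, hTay, hderiv (k+1) ξ (Set.Ioo_subset_Icc_self hξ)]
  set y : ℝ := a + b * ξ with hy
  have hy1 : 1 - 1/(2*(p:ℝ)) < y := hpos ξ (Set.Ioo_subset_Icc_self hξ)
  have hy0 : (0:ℝ) < y := by linarith
  have hb1 : |b| = 1 := by rcases hb with h | h <;> simp [h]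
  have hx1 : (0:ℝ) < x - 1 := sub_pos.2 hx
  have hfac : (0:ℝ) < ((k+1).factorial : ℝ) := by exact_mod_cast Nat.factorial_pos (k+1)
  have hDB : |∏ i ∈ Finset.range (k+1), (c - i)| * y ^ (c - ((k+1:ℕ):ℝ))
      ≤ (p:ℝ)^(k+1) * (Nat.factorial (k+1) : ℝ) * ((2*Real.exp 1)^((1:ℝ)/4) * 2^(k+1)) :=
    mul_le_mul (abs_prod_le p (k+1) hp) (exp_factor_bound k p hp hy1)
      (Real.rpow_nonneg hy0.le _) (by positivity)
  calc |b^(k+1) * (∏ i ∈ Finset.range (k+1), (c - i)) * y ^ (c - ((k+1:ℕ):ℝ)) * (x-1)^(k+1) / ((k+1).factorial : ℝ)|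
      = |∏ i ∈ Finset.range (k+1), (c - i)| * y ^ (c - ((k+1:ℕ):ℝ)) * (x-1)^(k+1) / ((k+1).factorial : ℝ) := by
        rw [abs_div, abs_mul, abs_mul, abs_mul, abs_pow, abs_pow, hb1, one_pow, one_mul,
          abs_of_pos (Real.rpow_pos_of_pos hy0 _), abs_of_pos hx1, abs_of_pos hfac]
    _ ≤ ((p:ℝ)^(k+1) * (Nat.factorial (k+1) : ℝ) * ((2*Real.exp 1)^((1:ℝ)/4) * 2^(k+1))) * (x-1)^(k+1) / ((k+1).factorial : ℝ) := by
        gcongr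
    _ = (p:ℝ)^(k+1) * (2*Real.exp 1)^((1:ℝ)/4) * 2^(k+1) * (x-1)^(k+1) := by
        field_simp

/-- Taylor expansion of `g₂(z) = z^(−p/2)` at `1`: the `j`-th Taylor coefficient is
bounded by `p^j` in absolute value, and for `|z−1| < 1/(2p)` the order-`k` remainder is
bounded by `p^(k+1)·(2e)^(1/4)·2^(k+1)·|z−1|^(k+1)`. -/
theorem rpow_neg_half_p_taylor (k p : ℕ) (hk : 0 < k) (hp : 0 < p) :
    (∀ j ∈ Finset.Icc 1 k,
      |(-1 / 2 : ℝ) ^ j / (Nat.factorial j : ℝ) * ∏ i ∈ Finset.range j, ((p : ℝ) + 2 * i)|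
        ≤ (p : ℝ) ^ j) ∧
    ∀ z : ℝ, 0 < z → |z - 1| < 1 / (2 * (p : ℝ)) →
      |z ^ (-(p : ℝ) / 2) -
          (1 + ∑ j ∈ Finset.Icc 1 k,
            (-1 / 2 : ℝ) ^ j / (Nat.factorial j : ℝ) *
              (∏ i ∈ Finset.range j, ((p : ℝ) + 2 * i)) * (z - 1) ^ j)|
        ≤ (p : ℝ) ^ (k + 1) * (2 * Real.exp 1) ^ ((1 : ℝ) / 4) * 2 ^ (k + 1) *
            |z - 1| ^ (k + 1) := by
  refine ⟨fun j _ => coeff_bound p j hp, ?_⟩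
  intro z hz0 hz1
  rcases lt_trichotomy z 1 with hlt | heq | hgt
  · -- z < 1 : reflect, x := 2 - z
    have hx : (1:ℝ) < 2 - z := by linarith
    have habs : |z - 1| = 1 - z := by rw [abs_of_neg (by linarith : z - 1 < 0)]; ring
    have hz1' : 1 - 1/(2*(p:ℝ)) < z := by
      have h := abs_lt.1 hz1
      linarith [h.1]
    have hpos : ∀ y ∈ Set.Icc (1:ℝ) (2 - z), 1 - 1/(2*(p:ℝ)) < 2 + (-1) * y := by
      intro y hy
      have hy2 := (Set.mem_Icc.1 hy).2
      linarith
    have H := taylor_estimate k p hp hx 2 (-1) (Or.inr rfl) (by ring) hpos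
    rw [show (2:ℝ) + (-1) * (2 - z) = z by ring,
        show ((-1:ℝ) * (2 - z - 1)) = z - 1 by ring,
        show ((2:ℝ) - z - 1) = 1 - z by ring] at H
    rw [habs]
    exact H
  · subst heq
    have hsum : (∑ j ∈ Finset.Icc 1 k, (-1 / 2 : ℝ) ^ j / (Nat.factorial j : ℝ) *
        (∏ i ∈ Finset.range j, ((p : ℝ) + 2 * i)) * ((1:ℝ) - 1) ^ j) = 0 := by
      apply Finset.sum_eq_zero
      intro j hj
      have hj1 : 1 ≤ j := (Finset.mem_Icc.1 hj).1
      rw [sub_self, zero_pow (by omega), mul_zero]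
    rw [hsum, Real.one_rpow]
    simp
  · have hpos : ∀ y ∈ Set.Icc (1:ℝ) z, 1 - 1/(2*(p:ℝ)) < 0 + 1 * y := by
      intro y hy
      have hy1 := (Set.mem_Icc.1 hy).1
      have : (0:ℝ) < 1/(2*(p:ℝ)) := by positivity
      linarith
    have H := taylor_estimate k p hp hgt 0 1 (Or.inl rfl) (by ring) hpos
    rw [show (0:ℝ) + 1 * z = z by ring,
        show ((1:ℝ) * (z - 1)) = z - 1 by ring] at H
    rw [show |z - 1| = z - 1 from abs_of_pos (by linarith)]
    exact H
end
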